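/- Let t be a target distribution with finite or countably infinite support of cardinality n, and let M be a positive integer with M < n. Let p be an M-type distribution minimizing D(q‖t) over all M-type distributions q, and let k be the support size of p. Then D(p‖t) < (1/2) · (r log r / (r − 1)) · (k/(2M) + 2 T_k), where r = 1/(1 − T_k) + e/t_1. -/

import Mathlib

/-- A target distribution: a probability distribution on the positive integers
(indexed here by ℕ) with nonincreasing entries. -/
def IsTargetDist (t : ℕ → ℝ) : Prop :=
  (∀ i, 0 ≤ t i) ∧ (∀ i, t (i + 1) ≤ t i) ∧ HasSum t 1

/-- An `M`-type distribution: every entry is `c_i / M` for a nonnegative integer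
`c_i ≤ M`, and the entries sum to one. -/
def IsMType (M : ℕ) (p : ℕ → ℝ) : Prop :=
  HasSum p 1 ∧ ∃ c : ℕ → ℕ, (∀ i, c i ≤ M) ∧ ∀ i, p i = (c i : ℝ) / M

open Classical in
/-- Informational divergence `D(p‖t) = Σ_{i : p_i > 0} p_i log(p_i / t_i)`
(natural log), valued in the extended reals: it is `⊤` if `p` puts mass where
`t` does not. -/
noncomputable def klE (p t : ℕ → ℝ) : EReal :=
  if ∀ i, 0 < p i → 0 < t i then
    (((∑' i, if 0 < p i then p i * Real.log (p i / t i) else 0 : ℝ) : EReal))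
  else ⊤

/-- Tail mass `T_k = Σ_{i > k} t_i` (the first `k` indices are `0, …, k−1`). -/
noncomputable def tailMass (t : ℕ → ℝ) (k : ℕ) : ℝ := ∑' i, t (k + i)

open Finset


/-- strict convexity increment bound for x ↦ x log (x/τ) -/
lemma steep_ineq {τ a b : ℝ} (hτ : 0 < τ) (ha : 0 ≤ a) (hab : a < b) :
    b * Real.log (b / τ) - a * Real.log (a / τ) < (b - a) * (Real.log (b / τ) + 1) := by
  have hb : 0 < b := lt_of_le_of_lt ha hab
  rcases eq_or_lt_of_le ha with h0 | ha'
  · subst h0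
    simp only [zero_mul, sub_zero, Real.log_zero, zero_div]
    nlinarith [hb]
  · have hba : 0 < b / a := div_pos hb ha'
    have hne : b / a ≠ 1 := by
      field_simp
      exact fun h => hab.ne' ((div_eq_one_iff_eq ha'.ne').mp h)
    have hlog : Real.log (b / a) < b / a - 1 := Real.log_lt_sub_one_of_pos hba hne
    have hlogsplit : Real.log (b / τ) - Real.log (a / τ) = Real.log (b / a) := by
      rw [Real.log_div (ne_of_gt hb) (ne_of_gt hτ), Real.log_div (ne_of_gt ha') (ne_of_gt hτ),
        Real.log_div (ne_of_gt hb) (ne_of_gt ha')]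
      ring
    have h2 : a * Real.log (b / a) < b - a := by
      have := (mul_lt_mul_of_pos_left hlog ha')
      calc a * Real.log (b/a) < a * (b/a - 1) := this
        _ = b - a := by field_simp
    nlinarith [hlogsplit]

/-- x ↦ x log x / (x-1) is strictly monotone on (1,∞) -/
lemma g_strictMono : StrictMonoOn (fun x : ℝ => x * Real.log x / (x - 1)) (Set.Ioi 1) := by
  have hderiv : ∀ x : ℝ, x ∈ Set.Ioi (1:ℝ) →
      HasDerivAt (fun x : ℝ => x * Real.log x / (x - 1))
        (((Real.log x + 1) * (x - 1) - x * Real.log x * 1) / (x - 1) ^ 2) x := by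
    intro x hx
    have hx1 : (1:ℝ) < x := hx
    have h1 : HasDerivAt (fun x : ℝ => x * Real.log x) (Real.log x + 1) x :=
      Real.hasDerivAt_mul_log (by linarith)
    have h2 : HasDerivAt (fun x : ℝ => x - 1) 1 x := (hasDerivAt_id x).sub_const 1
    exact h1.div h2 (by linarith)
  apply strictMonoOn_of_deriv_pos (convex_Ioi 1)
  · intro x hx
    exact ((hderiv x hx).differentiableAt).continuousAt.continuousWithinAt
  · intro x hx
    rw [interior_Ioi] at hx
    rw [(hderiv x hx).deriv]
    have hx1 : (1:ℝ) < x := hx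
    have hlog : Real.log x < x - 1 := Real.log_lt_sub_one_of_pos (by linarith) (by linarith)
    have hnum : 0 < (Real.log x + 1) * (x - 1) - x * Real.log x * 1 := by nlinarith
    apply div_pos hnum
    have : x - 1 > 0 := by linarith
    positivity

/-- pointwise reverse-Pinsker bound -/
lemma pw_pinsker {ρ τ w : ℝ} (hρ : 1 < ρ) (hτ : 0 < τ) (hw : 0 ≤ w) (hr : w ≤ ρ * τ) :
    (if 0 < w then w * Real.log (w / τ) else 0) ≤
      ρ * Real.log ρ / (ρ - 1) / 2 * ((w - τ) + |w - τ|) := by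
  rcases le_or_gt w τ with hle | hgt
  · have habs : |w - τ| = τ - w := by rw [abs_of_nonpos (by linarith)]; ring
    rw [habs]
    have hrhs : ρ * Real.log ρ / (ρ - 1) / 2 * ((w - τ) + (τ - w)) = 0 := by ring_nf
    rw [hrhs]
    split_ifs with h
    · apply mul_nonpos_of_nonneg_of_nonpos (le_of_lt h)
      apply Real.log_nonpos (by positivity)
      exact div_le_one_of_le₀ hle (le_of_lt hτ)
    · exact le_refl 0
  · have hwpos : 0 < w := lt_trans hτ hgt
    rw [if_pos hwpos]
    have habs : |w - τ| = w - τ := abs_of_pos (by linarith)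
    rw [habs]
    have hx1 : 1 < w / τ := (one_lt_div hτ).mpr hgt
    have hxρ : w / τ ≤ ρ := (div_le_iff₀ hτ).mpr (by linarith [hr])
    set x := w / τ with hxdef
    have hmono : x * Real.log x / (x - 1) ≤ ρ * Real.log ρ / (ρ - 1) :=
      g_strictMono.monotoneOn hx1 hρ hxρ
    have hx1' : 0 < x - 1 := by linarith
    have hkey : x * Real.log x ≤ ρ * Real.log ρ / (ρ - 1) * (x - 1) := by
      have := mul_le_mul_of_nonneg_right hmono (le_of_lt hx1')
      calc x * Real.log x = x * Real.log x / (x-1) * (x-1) := by field_simp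
        _ ≤ ρ * Real.log ρ / (ρ - 1) * (x - 1) := this
    have hstep : w * Real.log (w/τ) = τ * (x * Real.log x) := by
      rw [hxdef]; field_simp
    calc w * Real.log (w/τ) = τ * (x * Real.log x) := hstep
      _ ≤ τ * (ρ * Real.log ρ / (ρ - 1) * (x - 1)) := by
          exact mul_le_mul_of_nonneg_left hkey (le_of_lt hτ)
      _ = ρ * Real.log ρ / (ρ - 1) / 2 * ((w - τ) + (w - τ)) := by
          have hxw : τ * (x - 1) = w - τ := by
            rw [hxdef]; field_simp
          rw [show τ * (ρ * Real.log ρ / (ρ - 1) * (x - 1)) =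
            ρ * Real.log ρ / (ρ - 1) * (τ * (x-1)) by ring, hxw]; ring

lemma select_top (S : Finset ℕ) (f : ℕ → ℝ) (h : ℕ) (hh : h ≤ S.card) :
    ∃ U, U ⊆ S ∧ U.card = h ∧ ∀ u ∈ U, ∀ v ∈ S, v ∉ U → f v ≤ f u := by
  obtain ⟨U, hUmem, hUmax⟩ := Finset.exists_max_image (S.powersetCard h)
    (fun V => ∑ i ∈ V, f i) (Finset.powersetCard_nonempty.mpr hh)
  obtain ⟨hUS, hUcard⟩ := Finset.mem_powersetCard.mp hUmem
  refine ⟨U, hUS, hUcard, ?_⟩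
  intro u hu v hv hvU
  by_contra hlt
  push_neg at hlt
  set U' : Finset ℕ := insert v (U.erase u) with hU'
  have hvne : v ∉ U.erase u := fun hc => hvU (Finset.mem_of_mem_erase hc)
  have hcard' : U'.card = h := by
    rw [hU', Finset.card_insert_of_notMem hvne, Finset.card_erase_of_mem hu, hUcard]
    have : 1 ≤ h := by
      rw [← hUcard]; exact Finset.card_pos.mpr ⟨u, hu⟩
    omega
  have hUS' : U' ⊆ S := by
    intro x hx
    rcases Finset.mem_insert.mp hx with rfl | hx'
    · exact hv
    · exact hUS (Finset.mem_of_mem_erase hx')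
  have hmem' : U' ∈ S.powersetCard h := Finset.mem_powersetCard.mpr ⟨hUS', hcard'⟩
  have hsum' : ∑ i ∈ U', f i = f v + (∑ i ∈ U, f i - f u) := by
    rw [hU', Finset.sum_insert hvne]
    have := Finset.sum_erase_add U f hu
    linarith
  have := hUmax U' hmem'
  rw [hsum'] at this
  linarith

lemma sum_diff_two {F : Finset ℕ} {f g : ℕ → ℝ} {a b : ℕ} (ha : a ∈ F) (hb : b ∈ F)
    (hab : a ≠ b) (hfg : ∀ i ∈ F, i ≠ a → i ≠ b → f i = g i)
    (hle : ∑ i ∈ F, f i ≤ ∑ i ∈ F, g i) :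
    f a + f b ≤ g a + g b := by
  classical
  have hbmem : b ∈ F.erase a := Finset.mem_erase.mpr ⟨(Ne.symm hab), hb⟩
  have h1 : ∑ i ∈ (F.erase a).erase b, f i + f b + f a = ∑ i ∈ F, f i := by
    rw [Finset.sum_erase_add _ _ hbmem, Finset.sum_erase_add _ _ ha]
  have h2 : ∑ i ∈ (F.erase a).erase b, g i + g b + g a = ∑ i ∈ F, g i := by
    rw [Finset.sum_erase_add _ _ hbmem, Finset.sum_erase_add _ _ ha]
  have h3 : ∑ i ∈ (F.erase a).erase b, f i = ∑ i ∈ (F.erase a).erase b, g i := by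
    apply Finset.sum_congr rfl
    intro i hi
    have hi1 := Finset.mem_erase.mp hi
    have hi2 := Finset.mem_erase.mp hi1.2
    exact hfg i hi2.2 hi2.1 hi1.1
  linarith


open Classical in
lemma klE_eq_sum (p t : ℕ → ℝ) (F : Finset ℕ) (hF : ∀ i, 0 < p i → i ∈ F)
    (hpt : ∀ i, 0 < p i → 0 < t i) :
    klE p t = ((∑ i ∈ F, if 0 < p i then p i * Real.log (p i / t i) else 0 : ℝ) : EReal) := by
  unfold klE
  rw [if_pos hpt]
  congr 1
  exact tsum_eq_sum fun b hb => if_neg (fun h => hb (hF b h))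

set_option maxHeartbeats 2000000 in
/-- if `t` has support of cardinality `n > M` (i.e. more than `M`
positive entries: `0 < t M` in 0-based indexing) and `p` is an informational-divergence
optimal `M`-type approximation with support size `k`, then
`D(p‖t) < (1/2) (r log r/(r−1)) (k/(2M) + 2 T_k)` where `r = 1/(1−T_k) + e/t_1`. -/
theorem stmt18 (t : ℕ → ℝ) (ht : IsTargetDist t) (M : ℕ) (hM : 0 < M)
    (hn : 0 < t M)
    (p : ℕ → ℝ) (hp : IsMType M p)
    (hopt : ∀ q, IsMType M q → klE p t ≤ klE q t) :
    ∀ k : ℕ, ∀ Tk r : ℝ,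
      k = Nat.card {i | 0 < p i} → Tk = tailMass t k →
      r = 1 / (1 - Tk) + Real.exp 1 / t 0 →
      klE p t <
        (((1 / 2) * (r * Real.log r / (r - 1)) *
          ((k : ℝ) / (2 * M) + 2 * Tk) : ℝ) : EReal) := by
  classical
  intro k Tk r hk hTk hr
  obtain ⟨hpsum, c, hcle, hceq⟩ := hp
  have htnn : ∀ i, 0 ≤ t i := ht.1
  have htmono : Antitone t := antitone_nat_of_succ_le ht.2.1
  have htsum : HasSum t 1 := ht.2.2
  have hMR : (0:ℝ) < M := Nat.cast_pos.mpr hM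
  have hpnn : ∀ i, 0 ≤ p i := fun i => by rw [hceq]; positivity
  have hpge : ∀ i, 0 < p i → 1 / M ≤ p i := by
    intro i hi
    rw [hceq] at hi ⊢
    rcases Nat.eq_zero_or_pos (c i) with h0 | h1
    · rw [h0] at hi; simp at hi
    · have h1' : (1:ℝ) ≤ (c i : ℝ) := by exact_mod_cast h1
      gcongr
  have ht0 : 0 < t 0 := lt_of_lt_of_le hn (htmono (Nat.zero_le M))
  have he1 : (1:ℝ) < Real.exp 1 := by
    have := Real.add_one_lt_exp (x := 1) (by norm_num)
    linarith
  -- finiteness of the support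
  have hSfin : {i | 0 < p i}.Finite := by
    by_contra hinf
    have hinf' : Set.Infinite {i | 0 < p i} := hinf
    obtain ⟨T, hTsub, hTcard⟩ := hinf'.exists_subset_card_eq (M + 1)
    have h1 : ∑ i ∈ T, p i ≤ 1 := sum_le_hasSum T (fun i _ => hpnn i) hpsum
    have h2 : ∀ i ∈ T, 1 / (M:ℝ) ≤ p i := fun i hi => hpge i (hTsub hi)
    have h3 : (T.card : ℝ) * (1 / M) ≤ ∑ i ∈ T, p i := by
      calc (T.card : ℝ) * (1/M) = ∑ _i ∈ T, (1/(M:ℝ)) := by rw [Finset.sum_const]; ring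
        _ ≤ ∑ i ∈ T, p i := Finset.sum_le_sum h2
    rw [hTcard] at h3
    push_cast at h3
    have h4 := le_trans h3 h1
    rw [mul_one_div, div_le_one hMR] at h4
    linarith
  set S : Finset ℕ := hSfin.toFinset with hSdef
  have hSmem : ∀ i, i ∈ S ↔ 0 < p i := fun i => hSfin.mem_toFinset
  clear_value S
  have hppos : ∀ i ∈ S, 0 < p i := fun i hi => (hSmem i).mp hi
  have hkcard : k = S.card := by
    rw [hk, hSdef, Nat.card_eq_card_finite_toFinset hSfin]
  have hFsum1 : ∀ F : Finset ℕ, S ⊆ F → ∑ i ∈ F, p i = 1 := by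
    intro F hSF
    refine HasSum.unique ?_ hpsum
    apply hasSum_sum_of_ne_finset_zero
    intro b hb
    have : ¬ 0 < p b := fun h => hb (hSF ((hSmem b).mpr h))
    linarith [hpnn b, this]
  have hSsum : ∑ i ∈ S, p i = 1 := hFsum1 S (le_refl _)
  have hSne : S.Nonempty := by
    by_contra h
    rw [Finset.not_nonempty_iff_eq_empty] at h
    rw [h, Finset.sum_empty] at hSsum
    norm_num at hSsum
  have hkpos : 0 < k := by
    rw [hkcard]; exact Finset.card_pos.mpr hSne
  have hkM : k ≤ M := by
    have h3 : (S.card : ℝ) * (1 / M) ≤ 1 := by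
      calc (S.card : ℝ) * (1/M) = ∑ _i ∈ S, (1/(M:ℝ)) := by rw [Finset.sum_const]; ring
        _ ≤ ∑ i ∈ S, p i := Finset.sum_le_sum (fun i hi => hpge i (hppos i hi))
        _ = 1 := hSsum
    rw [hkcard]
    by_contra hc
    push_neg at hc
    have : (M:ℝ) + 1 ≤ (S.card : ℝ) := by exact_mod_cast hc
    rw [mul_one_div, div_le_one hMR] at h3
    linarith
  -- klE p t is finite: t is positive on the support of p
  have hq0 : IsMType M (fun i => if i = 0 then (1:ℝ) else 0) := by
    constructor
    · exact hasSum_ite_eq 0 1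
    · refine ⟨fun i => if i = 0 then M else 0, fun i => ?_, fun i => ?_⟩
      · by_cases h : i = 0 <;> simp [h]
      · by_cases h : i = 0 <;> simp [h]
        field_simp
  have hpt : ∀ i, 0 < p i → 0 < t i := by
    by_contra hcond
    have htop : klE p t = ⊤ := by
      unfold klE
      rw [if_neg hcond]
    have h2 := hopt _ hq0
    rw [htop] at h2
    have h3 : klE (fun i => if i = 0 then (1:ℝ) else 0) t = ⊤ := top_le_iff.mp h2
    rw [klE_eq_sum _ t {0} (fun i hi => by
        simp only [Finset.mem_singleton]
        by_contra hne
        rw [if_neg hne] at hi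
        exact lt_irrefl 0 hi)
      (fun i hi => by
        by_cases h : i = 0
        · subst h; exact ht0
        · rw [if_neg h] at hi; norm_num at hi)] at h3
    exact EReal.coe_ne_top _ h3
  -- every support atom has t i > t 0 / (e M)
  have hklow : ∀ i ∈ S, t 0 / (Real.exp 1 * M) < t i := by
    intro i hiS
    by_cases hi0 : i = 0
    · subst hi0
      have hM1 : (1:ℝ) ≤ M := by exact_mod_cast hM
      have h1 : 1 < Real.exp 1 * M := by nlinarith
      exact div_lt_self ht0 h1
    · have hpi : 0 < p i := hppos i hiS
      have hti : 0 < t i := hpt i hpi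
      have h0S : S ⊆ insert 0 S := Finset.subset_insert 0 S
      have hcsum : ∑ a ∈ insert 0 S, (c a : ℝ) = M := by
        have h1 := hFsum1 (insert 0 S) h0S
        have h2 : ∑ a ∈ insert 0 S, (c a : ℝ) = ∑ a ∈ insert 0 S, p a * M := by
          apply Finset.sum_congr rfl
          intro a _
          rw [hceq a]
          field_simp
        rw [h2, ← Finset.sum_mul, h1, one_mul]
      have hc0i : (c 0 : ℝ) + c i ≤ M := by
        have hsub : ({0, i} : Finset ℕ) ⊆ insert 0 S := by
          intro x hx
          rcases Finset.mem_insert.mp hx with rfl | hx'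
          · exact Finset.mem_insert_self 0 S
          · rw [Finset.mem_singleton] at hx'
            subst hx'
            exact Finset.mem_insert_of_mem hiS
        have h1 : ∑ a ∈ ({0, i} : Finset ℕ), (c a : ℝ) ≤ ∑ a ∈ insert 0 S, (c a : ℝ) :=
          Finset.sum_le_sum_of_subset_of_nonneg hsub (fun a _ _ => by positivity)
        rw [Finset.sum_pair (Ne.symm hi0)] at h1
        rw [hcsum] at h1
        exact h1
      set q1 : ℕ → ℝ := Function.update (Function.update p i 0) 0 (p 0 + p i) with hq1def
      have hup0 : Function.update p i 0 0 = p 0 := Function.update_of_ne (Ne.symm hi0) 0 p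
      have hq10 : q1 0 = p 0 + p i := by rw [hq1def]; simp
      have hq1i : q1 i = 0 := by
        rw [hq1def, Function.update_of_ne hi0]
        simp
      have hq1a : ∀ a, a ≠ 0 → a ≠ i → q1 a = p a := by
        intro a ha0 hai
        rw [hq1def, Function.update_of_ne ha0, Function.update_of_ne hai]
      have hq1M : IsMType M q1 := by
        constructor
        · have h1 := (hpsum.update i 0).update 0 (p 0 + p i)
          have h2 : (p 0 + p i) - Function.update p i 0 0 + (0 - p i + 1) = 1 := by
            rw [hup0]; ring
          rw [h2] at h1
          exact h1
        · refine ⟨fun a => if a = 0 then c 0 + c i else if a = i then 0 else c a,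
            fun a => ?_, fun a => ?_⟩
          · beta_reduce
            by_cases h0 : a = 0
            · simp only [if_pos h0]
              exact_mod_cast hc0i
            · rw [if_neg h0]
              by_cases hai : a = i
              · rw [if_pos hai]; exact Nat.zero_le M
              · rw [if_neg hai]; exact hcle a
          · beta_reduce
            by_cases h0 : a = 0
            · subst h0
              rw [hq10, if_pos rfl, hceq 0, hceq i]
              push_cast
              rw [← add_div]
            · by_cases hai : a = i
              · subst hai
                rw [hq1i, if_neg h0, if_pos rfl]
                norm_num
              · rw [hq1a a h0 hai, if_neg h0, if_neg hai, hceq a]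
      have hDp := klE_eq_sum p t (insert 0 S)
        (fun a ha => Finset.mem_insert_of_mem ((hSmem a).mpr ha)) hpt
      have hq1supp : ∀ a, 0 < q1 a → a ∈ insert 0 S := by
        intro a ha
        by_cases h0 : a = 0
        · exact h0 ▸ Finset.mem_insert_self 0 S
        · by_cases hai : a = i
          · subst hai; rw [hq1i] at ha; exact absurd ha (lt_irrefl 0)
          · rw [hq1a a h0 hai] at ha
            exact Finset.mem_insert_of_mem ((hSmem a).mpr ha)
      have hq1post : ∀ a, 0 < q1 a → 0 < t a := by
        intro a ha
        by_cases h0 : a = 0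
        · exact h0 ▸ ht0
        · by_cases hai : a = i
          · subst hai; rw [hq1i] at ha; exact absurd ha (lt_irrefl 0)
          · rw [hq1a a h0 hai] at ha
            exact hpt a ha
      have hDq := klE_eq_sum q1 t (insert 0 S) hq1supp hq1post
      have hle := hopt q1 hq1M
      rw [hDp, hDq] at hle
      have hle' := EReal.coe_le_coe_iff.mp hle
      have hkey := sum_diff_two (Finset.mem_insert_self 0 S)
        (Finset.mem_insert_of_mem hiS) (Ne.symm hi0)
        (fun a _ ha0 hai => by rw [hq1a a ha0 hai]) hle'
      -- simplify the four terms
      beta_reduce at hkey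
      rw [hq10, hq1i] at hkey
      rw [if_pos hpi, if_neg (lt_irrefl (0:ℝ)),
        if_pos (show (0:ℝ) < p 0 + p i by have := hpnn 0; linarith)] at hkey
      have hterm0 : (if 0 < p 0 then p 0 * Real.log (p 0 / t 0) else 0)
          = p 0 * Real.log (p 0 / t 0) := by
        split_ifs with h
        · rfl
        · have : p 0 = 0 := le_antisymm (not_lt.mp h) (hpnn 0)
          rw [this, zero_mul]
      rw [hterm0] at hkey
      have hsteep := steep_ineq ht0 (hpnn 0) (show p 0 < p 0 + p i by linarith)
      have h8 : p i * Real.log (p i / t i) < p i * (Real.log ((p 0 + p i) / t 0) + 1) := by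
        linarith
      have hlog1 : Real.log (p i / t i) < Real.log ((p 0 + p i) / t 0) + 1 :=
        (mul_lt_mul_iff_right₀ hpi).mp h8
      have hb1 : p 0 + p i ≤ 1 := by
        have h9 : ∑ a ∈ ({0, i} : Finset ℕ), p a ≤ 1 :=
          sum_le_hasSum _ (fun a _ => hpnn a) hpsum
        rw [Finset.sum_pair (Ne.symm hi0)] at h9
        exact h9
      have hlog2 : Real.log ((p 0 + p i) / t 0) ≤ Real.log (1 / t 0) := by
        have hb0 : (0:ℝ) < p 0 + p i := by have := hpnn 0; linarith
        apply Real.log_le_log (div_pos hb0 ht0)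
        gcongr
      have hlog3 : Real.log (p i / t i) < Real.log (1 / t 0) + 1 := by linarith
      have hexp1 : p i / t i < Real.exp 1 / t 0 := by
        have h5 : p i / t i = Real.exp (Real.log (p i / t i)) :=
          (Real.exp_log (div_pos hpi hti)).symm
        have h6 : Real.exp (Real.log (p i / t i)) < Real.exp (Real.log (1 / t 0) + 1) :=
          Real.exp_lt_exp.mpr hlog3
        rw [Real.exp_add, Real.exp_log (by positivity : (0:ℝ) < 1 / t 0)] at h6
        rw [h5]
        calc Real.exp (Real.log (p i / t i)) < 1 / t 0 * Real.exp 1 := h6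
          _ = Real.exp 1 / t 0 := by ring
      have h7 : 1 / (M : ℝ) / t i ≤ p i / t i := by
        gcongr
        exact hpge i hpi
      have h10 : 1 / (M:ℝ) / t i < Real.exp 1 / t 0 := lt_of_le_of_lt h7 hexp1
      rw [div_lt_div_iff₀ hti ht0] at h10
      rw [div_lt_iff₀ (by positivity : (0:ℝ) < Real.exp 1 * M)]
      calc t 0 = (M:ℝ) * (1/M * t 0) := by field_simp
        _ < M * (Real.exp 1 * t i) := mul_lt_mul_of_pos_left h10 hMR
        _ = t i * (Real.exp 1 * M) := by ring
  -- swap argument: support structure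
  have hswap : ∀ i j, i ∉ S → j ∈ S → i < j → t i = t j := by
    intro i j hiS hjS hij
    have hpj : 0 < p j := hppos j hjS
    have htj : 0 < t j := hpt j hpj
    have hti : 0 < t i := lt_of_lt_of_le htj (htmono (le_of_lt hij))
    have hpi0 : p i = 0 := by
      have h1 : ¬ 0 < p i := fun h => hiS ((hSmem i).mpr h)
      linarith [hpnn i]
    have hij' : i ≠ j := ne_of_lt hij
    set q2 : ℕ → ℝ := Function.update (Function.update p j 0) i (p j) with hq2def
    have hupi : Function.update p j 0 i = p i := Function.update_of_ne hij' 0 p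
    have hq2i : q2 i = p j := by rw [hq2def]; simp
    have hq2j : q2 j = 0 := by
      rw [hq2def, Function.update_of_ne (Ne.symm hij')]
      simp
    have hq2a : ∀ a, a ≠ i → a ≠ j → q2 a = p a := fun a hai haj => by
      rw [hq2def, Function.update_of_ne hai, Function.update_of_ne haj]
    have hq2M : IsMType M q2 := by
      constructor
      · have h1 := (hpsum.update j 0).update i (p j)
        have h2 : p j - Function.update p j 0 i + (0 - p j + 1) = 1 := by
          rw [hupi, hpi0]; ring
        rw [h2] at h1
        exact h1
      · refine ⟨fun a => if a = i then c j else if a = j then 0 else c a,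
          fun a => ?_, fun a => ?_⟩
        · beta_reduce
          by_cases hai : a = i
          · rw [if_pos hai]; exact hcle j
          · rw [if_neg hai]
            by_cases haj : a = j
            · rw [if_pos haj]; exact Nat.zero_le M
            · rw [if_neg haj]; exact hcle a
        · beta_reduce
          by_cases hai : a = i
          · subst hai; rw [hq2i, if_pos rfl, hceq j]
          · rw [if_neg hai]
            by_cases haj : a = j
            · subst haj; rw [hq2j, if_pos rfl]; norm_num
            · rw [if_neg haj, hq2a a hai haj, hceq a]
    have hDp := klE_eq_sum p t (insert i S)
      (fun a ha => Finset.mem_insert_of_mem ((hSmem a).mpr ha)) hpt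
    have hq2supp : ∀ a, 0 < q2 a → a ∈ insert i S := by
      intro a ha
      by_cases hai : a = i
      · exact hai ▸ Finset.mem_insert_self i S
      · by_cases haj : a = j
        · subst haj; rw [hq2j] at ha; exact absurd ha (lt_irrefl 0)
        · rw [hq2a a hai haj] at ha
          exact Finset.mem_insert_of_mem ((hSmem a).mpr ha)
    have hq2post : ∀ a, 0 < q2 a → 0 < t a := by
      intro a ha
      by_cases hai : a = i
      · exact hai ▸ hti
      · by_cases haj : a = j
        · subst haj; rw [hq2j] at ha; exact absurd ha (lt_irrefl 0)
        · rw [hq2a a hai haj] at ha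
          exact hpt a ha
    have hDq := klE_eq_sum q2 t (insert i S) hq2supp hq2post
    have hle := hopt q2 hq2M
    rw [hDp, hDq] at hle
    have hle' := EReal.coe_le_coe_iff.mp hle
    have hkey := sum_diff_two (Finset.mem_insert_self i S)
      (Finset.mem_insert_of_mem hjS) hij'
      (fun a _ hai haj => by rw [hq2a a hai haj]) hle'
    beta_reduce at hkey
    rw [hq2i, hq2j, hpi0] at hkey
    rw [if_neg (lt_irrefl (0:ℝ)), if_neg (lt_irrefl (0:ℝ)), if_pos hpj, if_pos hpj] at hkey
    have h3 : p j * Real.log (p j / t j) ≤ p j * Real.log (p j / t i) := by linarith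
    have h4 : Real.log (p j / t j) ≤ Real.log (p j / t i) := (mul_le_mul_iff_right₀ hpj).mp h3
    have h5 : p j / t j ≤ p j / t i := by
      have := Real.exp_le_exp.mpr h4
      rwa [Real.exp_log (div_pos hpj htj), Real.exp_log (div_pos hpj hti)] at this
    rw [div_le_div_iff₀ htj hti] at h5
    have h6 : t i ≤ t j := by nlinarith
    exact le_antisymm h6 (htmono (le_of_lt hij))
  -- tail mass facts
  have hsummable := htsum.summable
  have hTk1 : ∑ i ∈ Finset.range k, t i + Tk = 1 := by
    rw [hTk]
    unfold tailMass
    have hcongr : ∑' i, t (k + i) = ∑' i, t (i + k) := tsum_congr fun i => by rw [add_comm]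
    rw [hcongr, Summable.sum_add_tsum_nat_add k hsummable, htsum.tsum_eq]
  have hTkpos : 0 < Tk := by
    rw [hTk]
    unfold tailMass
    have hsum2 : Summable (fun i => t (k + i)) := by
      have h1 := (summable_nat_add_iff k).mpr hsummable
      have h2 : (fun n => t (n + k)) = (fun n => t (k + n)) := funext fun n => by rw [add_comm]
      rwa [h2] at h1
    have h1 := Summable.le_tsum hsum2 (M - k) (fun j _ => htnn _)
    have h2 : k + (M - k) = M := by omega
    rw [h2] at h1
    linarith [hn]
  -- the support carries exactly the mass of the first k indices
  have hsigma : ∑ i ∈ S, t i = ∑ i ∈ Finset.range k, t i := by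
    set R := Finset.range k with hR
    have hcS : S.card = k := hkcard.symm
    have hc1 : (S \ R).card + (S ∩ R).card = k := by
      rw [Finset.card_sdiff_add_card_inter]; exact hcS
    have hc2 : (R \ S).card + (R ∩ S).card = k := by
      rw [Finset.card_sdiff_add_card_inter]; exact Finset.card_range k
    have hinterc : (S ∩ R).card = (R ∩ S).card := by rw [Finset.inter_comm]
    have hcard : (S \ R).card = (R \ S).card := by omega
    have hkey : ∀ a ∈ S \ R, ∀ b ∈ R \ S, t b = t a := by
      intro a ha b hb
      obtain ⟨haS, haR⟩ := Finset.mem_sdiff.mp ha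
      obtain ⟨hbR, hbS⟩ := Finset.mem_sdiff.mp hb
      have hak : k ≤ a := by
        by_contra h
        push_neg at h
        exact haR (Finset.mem_range.mpr h)
      have hbk : b < k := Finset.mem_range.mp hbR
      exact hswap b a hbS haS (lt_of_lt_of_le hbk hak)
    have hsplit1 : ∑ i ∈ S ∩ R, t i + ∑ i ∈ S \ R, t i = ∑ i ∈ S, t i :=
      Finset.sum_inter_add_sum_sdiff S R t
    have hsplit2 : ∑ i ∈ R ∩ S, t i + ∑ i ∈ R \ S, t i = ∑ i ∈ R, t i :=
      Finset.sum_inter_add_sum_sdiff R S t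
    have hieq : ∑ i ∈ S ∩ R, t i = ∑ i ∈ R ∩ S, t i := by rw [Finset.inter_comm]
    have hdiffeq : ∑ i ∈ S \ R, t i = ∑ i ∈ R \ S, t i := by
      rcases Finset.eq_empty_or_nonempty (S \ R) with he | hne
      · have hBe : R \ S = ∅ := by
          apply Finset.card_eq_zero.mp
          rw [← hcard, he, Finset.card_empty]
        rw [he, hBe]
      · obtain ⟨a0, ha0⟩ := hne
        have hBne : (R \ S).Nonempty := by
          rw [← Finset.card_pos, ← hcard, Finset.card_pos]
          exact ⟨a0, ha0⟩
        obtain ⟨b0, hb0⟩ := hBne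
        have hA : ∀ a ∈ S \ R, t a = t b0 := fun a ha => (hkey a ha b0 hb0).symm
        have hB : ∀ b ∈ R \ S, t b = t b0 := fun b hb => by
          rw [hkey a0 ha0 b hb, ← hkey a0 ha0 b0 hb0]
        calc ∑ i ∈ S \ R, t i = ∑ _i ∈ S \ R, t b0 := Finset.sum_congr rfl hA
          _ = (S \ R).card • t b0 := Finset.sum_const _
          _ = (R \ S).card • t b0 := by rw [hcard]
          _ = ∑ _i ∈ R \ S, t b0 := (Finset.sum_const _).symm
          _ = ∑ i ∈ R \ S, t i := Finset.sum_congr rfl (fun b hb => (hB b hb).symm)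
    linarith
  set σ : ℝ := ∑ i ∈ S, t i with hσdef
  clear_value σ
  have hσpos : 0 < σ := by
    rw [hσdef]
    exact Finset.sum_pos (fun i hi => hpt i (hppos i hi)) hSne
  have hσ0 : σ ≠ 0 := ne_of_gt hσpos
  have hM0 : (M:ℝ) ≠ 0 := ne_of_gt hMR
  have hσTk : σ = 1 - Tk := by linarith [hsigma, hTk1]
  have hσlt1 : σ < 1 := by linarith
  -- construction of the rounded distribution q
  set nfl : ℕ → ℕ := fun i => ⌊(M : ℝ) * t i / σ⌋₊ with hnfl
  have htROW : ∀ i, (0:ℝ) ≤ (M:ℝ) * t i / σ := fun i => by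
    have := htnn i
    positivity
  have hnfl_le : ∀ i, (nfl i : ℝ) ≤ (M:ℝ) * t i / σ := fun i => by
    rw [hnfl]; exact Nat.floor_le (htROW i)
  have hnfl_gt : ∀ i, (M:ℝ) * t i / σ < (nfl i : ℝ) + 1 := fun i => by
    rw [hnfl]; exact_mod_cast Nat.lt_floor_add_one ((M:ℝ) * t i / σ)
  clear_value nfl
  have hMtsum : ∑ i ∈ S, (M:ℝ) * t i / σ = M := by
    rw [← Finset.sum_div, ← Finset.mul_sum, ← hσdef, mul_div_assoc,
      div_self hσ0, mul_one]
  have hflsum_le : ∑ i ∈ S, nfl i ≤ M := by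
    have h1 : (↑(∑ i ∈ S, nfl i) : ℝ) ≤ (M:ℝ) := by
      push_cast
      calc ∑ i ∈ S, (nfl i : ℝ) ≤ ∑ i ∈ S, (M:ℝ) * t i / σ :=
            Finset.sum_le_sum (fun i _ => hnfl_le i)
        _ = M := hMtsum
    exact_mod_cast h1
  set hh : ℕ := M - ∑ i ∈ S, nfl i with hhdef
  clear_value hh
  have hhsum : ∑ i ∈ S, nfl i + hh = M := by omega
  have hhk : hh ≤ k := by
    have h1 : (M:ℝ) < ∑ i ∈ S, ((nfl i : ℝ) + 1) := by
      rw [← hMtsum]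
      apply Finset.sum_lt_sum_of_nonempty hSne
      intro i _
      exact hnfl_gt _
    have h2 : ∑ i ∈ S, ((nfl i : ℝ) + 1) = (∑ i ∈ S, (nfl i:ℝ)) + k := by
      rw [Finset.sum_add_distrib, Finset.sum_const, hkcard]
      push_cast
      ring
    rw [h2] at h1
    have h3 : (M:ℕ) < ∑ i ∈ S, nfl i + k := by
      have : ((M:ℝ)) < ((∑ i ∈ S, nfl i + k : ℕ) : ℝ) := by push_cast; linarith
      exact_mod_cast this
    omega
  obtain ⟨U, hUS, hUcard, hUsep⟩ :=
    select_top S (fun i => (M:ℝ) * t i / σ - nfl i) hh (by rw [← hkcard]; exact hhk)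
  set cq : ℕ → ℕ := fun i => if i ∈ U then nfl i + 1 else if i ∈ S then nfl i else 0 with hcq
  clear_value cq
  set q : ℕ → ℝ := fun i => (cq i : ℝ) / M with hqdef
  clear_value q
  have hq_out : ∀ i, i ∉ S → q i = 0 := by
    intro i hiS
    have hiU : i ∉ U := fun h => hiS (hUS h)
    rw [hqdef]
    beta_reduce
    rw [hcq]
    beta_reduce
    rw [if_neg hiU, if_neg hiS]
    norm_num
  have hcqsum : ∑ i ∈ S, cq i = M := by
    have h1 : ∀ i ∈ S, cq i = nfl i + (if i ∈ U then 1 else 0) := by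
      intro i hi
      rw [hcq]
      beta_reduce
      by_cases hiU : i ∈ U
      · rw [if_pos hiU, if_pos hiU]
      · rw [if_neg hiU, if_pos hi, if_neg hiU]
        omega
    rw [Finset.sum_congr rfl h1, Finset.sum_add_distrib]
    have h2 : ∑ i ∈ S, (if i ∈ U then 1 else 0) = hh := by
      rw [Finset.sum_ite_mem]
      have : S ∩ U = U := Finset.inter_eq_right.mpr hUS
      rw [this, Finset.sum_const, hUcard, smul_eq_mul, mul_one]
    rw [h2]
    exact hhsum
  have hqSsum : ∑ i ∈ S, q i = 1 := by
    rw [hqdef]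
    beta_reduce
    rw [← Finset.sum_div]
    rw [show ∑ i ∈ S, (cq i : ℝ) = ((∑ i ∈ S, cq i : ℕ) : ℝ) by push_cast; rfl]
    rw [hcqsum]
    field_simp
  have hqM : IsMType M q := by
    constructor
    · have h1 : HasSum q (∑ i ∈ S, q i) :=
        hasSum_sum_of_ne_finset_zero (fun b hb => hq_out b hb)
      rwa [hqSsum] at h1
    · refine ⟨cq, fun i => ?_, fun i => by rw [hqdef]⟩
      by_cases hiS : i ∈ S
      · calc cq i ≤ ∑ j ∈ S, cq j := Finset.single_le_sum (fun j _ => Nat.zero_le _) hiS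
          _ = M := hcqsum
      · have hiU : i ∉ U := fun h => hiS (hUS h)
        rw [hcq]
        beta_reduce
        rw [if_neg hiU, if_neg hiS]
        exact Nat.zero_le M
  have hqnn : ∀ i, 0 ≤ q i := fun i => by rw [hqdef]; positivity
  have hq_le : ∀ i ∈ S, q i ≤ t i / σ + 1 / M := by
    intro i hiS
    have h1 : (cq i : ℝ) ≤ (M:ℝ) * t i / σ + 1 := by
      rw [hcq]
      beta_reduce
      by_cases hiU : i ∈ U
      · rw [if_pos hiU]
        push_cast
        have := hnfl_le i
        linarith
      · rw [if_neg hiU, if_pos hiS]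
        have := hnfl_le i
        linarith
    rw [hqdef]
    beta_reduce
    rw [div_le_iff₀ hMR]
    calc (cq i : ℝ) ≤ (M:ℝ) * t i / σ + 1 := h1
      _ = (t i / σ + 1 / M) * M := by field_simp
  -- the TV bound for q against t/σ
  have hUsep' : ∀ u ∈ U, ∀ v ∈ S, v ∉ U →
      (M:ℝ) * t v / σ - nfl v ≤ (M:ℝ) * t u / σ - nfl u := hUsep
  have hFnn : ∀ i, 0 ≤ (M:ℝ) * t i / σ - nfl i :=
    fun i => sub_nonneg.mpr (hnfl_le i)
  have hFlt1 : ∀ i, (M:ℝ) * t i / σ - nfl i < 1 := fun i => by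
    have := hnfl_gt i
    linarith
  have hFsumS : ∑ i ∈ S, ((M:ℝ) * t i / σ - nfl i) = hh := by
    rw [Finset.sum_sub_distrib, hMtsum]
    have h2 : (∑ i ∈ S, (nfl i : ℝ)) + (hh:ℝ) = (M:ℝ) := by exact_mod_cast hhsum
    linarith
  have hsplitU : (∑ i ∈ U, ((M:ℝ) * t i / σ - nfl i))
      + (∑ i ∈ S \ U, ((M:ℝ) * t i / σ - nfl i)) = (hh:ℝ) := by
    rw [← hFsumS, ← Finset.sum_inter_add_sum_sdiff S U (fun i => (M:ℝ) * t i / σ - nfl i),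
      Finset.inter_eq_right.mpr hUS]
  have hAU : (hh:ℝ) * (hh:ℝ) ≤ (k:ℝ) * (∑ i ∈ U, ((M:ℝ) * t i / σ - nfl i)) := by
    set A := ∑ i ∈ U, ((M:ℝ) * t i / σ - nfl i) with hA
    set B := ∑ i ∈ S \ U, ((M:ℝ) * t i / σ - nfl i) with hB
    have hper : ∀ v ∈ S \ U, (hh:ℝ) * ((M:ℝ) * t v / σ - nfl v) ≤ A := by
      intro v hv
      obtain ⟨hvS, hvU⟩ := Finset.mem_sdiff.mp hv
      calc (hh:ℝ) * ((M:ℝ) * t v / σ - nfl v)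
          = ∑ _u ∈ U, ((M:ℝ) * t v / σ - nfl v) := by
            rw [Finset.sum_const, hUcard, nsmul_eq_mul]
        _ ≤ A := Finset.sum_le_sum (fun u hu => hUsep' u hu v hvS hvU)
    have h2 : (hh:ℝ) * B ≤ ((k:ℝ) - hh) * A := by
      have hcardSU : ((S \ U).card : ℝ) = (k:ℝ) - hh := by
        rw [Finset.card_sdiff_of_subset hUS, hUcard, ← hkcard]
        have : hh ≤ k := hhk
        push_cast [Nat.cast_sub this]
        ring
      calc (hh:ℝ) * B = ∑ v ∈ S \ U, (hh:ℝ) * ((M:ℝ) * t v / σ - nfl v) := by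
            rw [← Finset.mul_sum]
        _ ≤ ∑ _v ∈ S \ U, A := Finset.sum_le_sum hper
        _ = ((S \ U).card : ℝ) * A := by rw [Finset.sum_const, nsmul_eq_mul]
        _ = ((k:ℝ) - hh) * A := by rw [hcardSU]
    have h4 : (hh:ℝ) * A + (hh:ℝ) * B = (hh:ℝ) * (hh:ℝ) := by rw [← mul_add, hsplitU]
    have h6 : (k:ℝ) * A = (hh:ℝ) * A + ((k:ℝ) - (hh:ℝ)) * A := by ring
    linarith [h2, h4, h6]
  have htv1 : ∑ i ∈ S, |q i - t i / σ| ≤ (k:ℝ) / (2*M) := by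
    have hptw : ∀ i ∈ S, |q i - t i / σ|
        = (if i ∈ U then 1 - ((M:ℝ) * t i / σ - nfl i) else ((M:ℝ) * t i / σ - nfl i)) / M := by
      intro i hi
      rw [hqdef]
      beta_reduce
      rw [hcq]
      beta_reduce
      by_cases hiU : i ∈ U
      · rw [if_pos hiU, if_pos hiU]
        push_cast
        have h1 : ((nfl i : ℝ) + 1)/M - t i/σ = (1 - ((M:ℝ) * t i / σ - nfl i))/M := by
          field_simp
          ring
        rw [h1, abs_of_nonneg (div_nonneg (by linarith [hFlt1 i]) hMR.le)]
      · rw [if_neg hiU, if_pos hi, if_neg hiU]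
        have h1 : (nfl i : ℝ)/M - t i/σ = -(((M:ℝ) * t i / σ - nfl i)/M) := by
          field_simp
          ring
        rw [h1, abs_neg, abs_of_nonneg (div_nonneg (hFnn i) hMR.le)]
    rw [Finset.sum_congr rfl hptw, ← Finset.sum_div]
    have hsplit : ∑ i ∈ S, (if i ∈ U then 1 - ((M:ℝ) * t i / σ - nfl i)
        else ((M:ℝ) * t i / σ - nfl i))
        = (∑ i ∈ U, (1 - ((M:ℝ) * t i / σ - nfl i)))
          + ∑ i ∈ S \ U, ((M:ℝ) * t i / σ - nfl i) := by
      rw [← Finset.sum_inter_add_sum_sdiff S U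
        (fun i => if i ∈ U then 1 - ((M:ℝ) * t i / σ - nfl i) else ((M:ℝ) * t i / σ - nfl i)),
        Finset.inter_eq_right.mpr hUS]
      congr 1
      · exact Finset.sum_congr rfl (fun i hi => by rw [if_pos hi])
      · exact Finset.sum_congr rfl (fun i hi => by rw [if_neg (Finset.mem_sdiff.mp hi).2])
    rw [hsplit]
    have hsum1 : ∑ i ∈ U, (1 - ((M:ℝ) * t i / σ - nfl i))
        = (hh:ℝ) - ∑ i ∈ U, ((M:ℝ) * t i / σ - nfl i) := by
      rw [Finset.sum_sub_distrib, Finset.sum_const, hUcard, nsmul_eq_mul, mul_one]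
    rw [hsum1]
    have hBA : ∑ i ∈ S \ U, ((M:ℝ) * t i / σ - nfl i)
        = (hh:ℝ) - ∑ i ∈ U, ((M:ℝ) * t i / σ - nfl i) := by linarith [hsplitU]
    rw [hBA]
    set A2 : ℝ := ∑ i ∈ U, ((M:ℝ) * t i / σ - nfl i) with hA2
    clear_value A2
    rw [div_le_div_iff₀ hMR (by positivity : (0:ℝ) < 2*M)]
    have hkR : (0:ℝ) < k := by exact_mod_cast hkpos
    have h7 : 4*((hh:ℝ) - A2) ≤ k := by
      nlinarith [hAU, sq_nonneg ((k:ℝ) - 2*(hh:ℝ)), hkR]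
    nlinarith [h7, hMR]
  -- ratio bounds
  have hσeq : (1:ℝ) - Tk = σ := by linarith
  have hqr : ∀ i ∈ S, q i / t i < r := by
    intro i hi
    have hti : 0 < t i := hpt i (hppos i hi)
    have h1 : q i / t i ≤ (t i/σ + 1/M)/t i := by
      gcongr
      exact hq_le i hi
    have h2 : (t i/σ + 1/M)/t i = 1/σ + 1/((M:ℝ) * t i) := by
      field_simp
    have h3 : 1/((M:ℝ) * t i) < Real.exp 1 / t 0 := by
      rw [div_lt_div_iff₀ (by positivity) ht0]
      have h4 := hklow i hi
      rw [div_lt_iff₀ (by positivity : (0:ℝ) < Real.exp 1 * M)] at h4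
      nlinarith
    rw [hr, hσeq]
    rw [h2] at h1
    linarith
  have hex : ∃ i ∈ S, t i < q i := by
    by_contra hc
    push_neg at hc
    have h1 : (1:ℝ) ≤ σ := by
      calc (1:ℝ) = ∑ i ∈ S, q i := hqSsum.symm
        _ ≤ ∑ i ∈ S, t i := Finset.sum_le_sum hc
        _ = σ := hσdef.symm
    linarith
  set ρ := S.sup' hSne (fun i => q i / t i) with hρdef
  clear_value ρ
  have hρr : ρ < r := by
    rw [hρdef]
    exact (Finset.sup'_lt_iff hSne).mpr hqr
  obtain ⟨i0, hi0S, hi0⟩ := hex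
  have hρ1 : 1 < ρ := by
    rw [hρdef]
    apply (Finset.lt_sup'_iff hSne).mpr
    exact ⟨i0, hi0S, (one_lt_div (hpt i0 (hppos i0 hi0S))).mpr hi0⟩
  have hρb : ∀ i ∈ S, q i ≤ ρ * t i := by
    intro i hi
    have hti : 0 < t i := hpt i (hppos i hi)
    have h1 : q i / t i ≤ ρ := by
      rw [hρdef]
      exact Finset.le_sup' (fun i => q i / t i) hi
    exact (div_le_iff₀ hti).mp h1
  -- final assembly
  have hr1 : 1 < r := lt_trans hρ1 hρr
  have hgρr : ρ * Real.log ρ/(ρ-1) < r * Real.log r/(r-1) :=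
    g_strictMono (Set.mem_Ioi.mpr hρ1) (Set.mem_Ioi.mpr hr1) hρr
  have hgρpos : 0 < ρ * Real.log ρ/(ρ-1) :=
    div_pos (mul_pos (by linarith) (Real.log_pos hρ1)) (by linarith)
  have hDq_le : ∑ i ∈ S, (if 0 < q i then q i * Real.log (q i / t i) else 0)
      ≤ (ρ * Real.log ρ/(ρ-1)/2) * (Tk + ∑ i ∈ S, |q i - t i|) := by
    calc ∑ i ∈ S, (if 0 < q i then q i * Real.log (q i / t i) else 0)
        ≤ ∑ i ∈ S, (ρ * Real.log ρ/(ρ-1)/2) * ((q i - t i) + |q i - t i|) :=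
          Finset.sum_le_sum (fun i hi =>
            pw_pinsker hρ1 (hpt i (hppos i hi)) (hqnn i) (hρb i hi))
      _ = (ρ * Real.log ρ/(ρ-1)/2) * ((1 - σ) + ∑ i ∈ S, |q i - t i|) := by
          rw [← Finset.mul_sum, Finset.sum_add_distrib, Finset.sum_sub_distrib, hqSsum, ← hσdef]
      _ = (ρ * Real.log ρ/(ρ-1)/2) * (Tk + ∑ i ∈ S, |q i - t i|) := by
          rw [show (1:ℝ) - σ = Tk by linarith]
  have htv2 : ∑ i ∈ S, |q i - t i| ≤ (k:ℝ)/(2*M) + Tk := by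
    have h1 : ∀ i ∈ S, |q i - t i| ≤ |q i - t i/σ| + (t i/σ - t i) := by
      intro i hi
      have h2 := abs_sub_le (q i) (t i/σ) (t i)
      have h3 : |t i/σ - t i| = t i/σ - t i := by
        apply abs_of_nonneg
        rw [sub_nonneg]
        rw [le_div_iff₀ hσpos]
        nlinarith [htnn i]
      linarith
    calc ∑ i ∈ S, |q i - t i| ≤ ∑ i ∈ S, (|q i - t i/σ| + (t i/σ - t i)) :=
        Finset.sum_le_sum h1
      _ = (∑ i ∈ S, |q i - t i/σ|) + ((∑ i ∈ S, t i/σ) - σ) := by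
          rw [Finset.sum_add_distrib, Finset.sum_sub_distrib, ← hσdef]
      _ = (∑ i ∈ S, |q i - t i/σ|) + (1 - σ) := by
          rw [← Finset.sum_div, ← hσdef, div_self (ne_of_gt hσpos)]
      _ ≤ (k:ℝ)/(2*M) + Tk := by
          have := htv1
          have h4 : (1:ℝ) - σ = Tk := by linarith
          linarith
  have hqsupp : ∀ i, 0 < q i → i ∈ S := by
    intro i hi
    by_contra h
    rw [hq_out i h] at hi
    exact lt_irrefl 0 hi
  have hqpost : ∀ i, 0 < q i → 0 < t i := fun i hi => hpt i (hppos i (hqsupp i hi))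
  have hDpval := klE_eq_sum p t S (fun i hi => (hSmem i).mpr hi) hpt
  have hle := hopt q hqM
  rw [hDpval, klE_eq_sum q t S hqsupp hqpost] at hle
  have hle' := EReal.coe_le_coe_iff.mp hle
  rw [hDpval]
  apply EReal.coe_lt_coe_iff.mpr
  have hX : (0:ℝ) < (k:ℝ)/(2*M) + 2*Tk := by
    have h1 : (0:ℝ) ≤ (k:ℝ)/(2*M) := by positivity
    linarith
  calc ∑ i ∈ S, (if 0 < p i then p i * Real.log (p i / t i) else 0)
      ≤ ∑ i ∈ S, (if 0 < q i then q i * Real.log (q i / t i) else 0) := hle'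
    _ ≤ (ρ * Real.log ρ/(ρ-1)/2) * (Tk + ∑ i ∈ S, |q i - t i|) := hDq_le
    _ ≤ (ρ * Real.log ρ/(ρ-1)/2) * ((k:ℝ)/(2*M) + 2*Tk) := by
        apply mul_le_mul_of_nonneg_left _ (by linarith [hgρpos])
        linarith [htv2]
    _ < (r * Real.log r/(r-1)/2) * ((k:ℝ)/(2*M) + 2*Tk) := by
        apply mul_lt_mul_of_pos_right _ hX
        linarith [hgρr]
    _ = 1 / 2 * (r * Real.log r / (r - 1)) * ((k:ℝ) / (2 * ↑M) + 2 * Tk) := by ring
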